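/- The polynomial P_Γ is symmetric, i.e. P_Γ(z, w) = P_Γ(w, z), and Γ is invariant under the diagonal action of each β_k: setting d₀(z) = z, d₁(z) = z − 1, d_λ(z) = z − λ (the denominators of β₀, β₁, β_λ), for each k ∈ {0, 1, λ} there exists a nonzero constant c_k ∈ ℂ such that the identity d_k(z)² d_k(w)² · P_Γ(β_k(z), β_k(w)) = c_k · P_Γ(z, w) holds in ℂ(z, w) (for k = 0 one can take c₀ = λ², i.e. z²w² P_Γ(λ/z, λ/w) = λ² P_Γ(z, w)). In particular the maps (z, w) ↦ (w, z) and (z, w) ↦ (β_k(z), β_k(w)) map the curve Γ onto itself. -/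
import Mathlib


/-- The bidegree `(2,2)` polynomial `P_Γ(z, w)` defining the curve `Γ ⊂ ℙ¹×ℙ¹`. -/
noncomputable def PGamma (l t z w : ℂ) : ℂ :=
  t ^ 2 * z ^ 2 - 2 * t * z ^ 2 * w + t ^ 2 * w ^ 2 - 2 * t * z * w ^ 2 + z ^ 2 * w ^ 2
    - 2 * l * t * z - 2 * l * t * w + 2 * (2 * (l + 1) * t - t ^ 2 - l) * z * w + l ^ 2

lemma pg0 (l t : ℂ) (z w : ℂ) (hz : z ≠ 0) (hw : w ≠ 0) :
    z ^ 2 * w ^ 2 * PGamma l t (l / z) (l / w) = l ^ 2 * PGamma l t z w := by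
  have ha : l / z * z = l := div_mul_cancel₀ l hz
  have hb : l / w * w = l := div_mul_cancel₀ l hw
  rw [PGamma, PGamma]
  linear_combination (z*w^2*(l/z)*(l/w)^2 + 4*t*z*w^2*(l/w) + (-2)*t*z*w^2*(l/w)^2 + (-2)*t*z*w^2*(l/z)*(l/w) + (-2)*t^2*z*w^2*(l/w) + t^2*z*w^2*(l/z) + l*w^2*(l/w)^2 + (-2)*l*z*w^2*(l/w) + (-2)*l*t*w^2*(l/w) + (-2)*l*t*z*w^2 + 4*l*t*z*w^2*(l/w) + l*t^2*w^2) * ha + (t^2*z^2*w*(l/w) + 4*l*t*z*w + (-2)*l*t*z*w*(l/w) + (-2)*l*t*z^2*w + (-2)*l*t^2*z*w + l*t^2*z^2 + l^2*w*(l/w) + (-2)*l^2*z*w + (-2)*l^2*t*w + (-2)*l^2*t*z + 4*l^2*t*z*w + l^3) * hb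

set_option maxHeartbeats 2000000 in
lemma pg1 (l t : ℂ) (z w : ℂ) (hz : z ≠ 1) (hw : w ≠ 1) :
    (z - 1) ^ 2 * (w - 1) ^ 2 * PGamma l t ((z - l) / (z - 1)) ((w - l) / (w - 1))
      = (l - 1) ^ 2 * PGamma l t z w := by
  have ha : (z - l) / (z - 1) * (z - 1) = z - l := div_mul_cancel₀ _ (sub_ne_zero.mpr hz)
  have hb : (w - l) / (w - 1) * (w - 1) = w - l := div_mul_cancel₀ _ (sub_ne_zero.mpr hw)
  rw [PGamma, PGamma]
  linear_combination ((-1)*((z-l)/(z-1))*((w-l)/(w-1))^2 + 2*w*((z-l)/(z-1))*((w-l)/(w-1))^2 + (-1)*w^2*((z-l)/(z-1))*((w-l)/(w-1))^2 + z*((w-l)/(w-1))^2 + z*((z-l)/(z-1))*((w-l)/(w-1))^2 + (-2)*z*w*((w-l)/(w-1))^2 + (-2)*z*w*((z-l)/(z-1))*((w-l)/(w-1))^2 + z*w^2*((w-l)/(w-1))^2 + z*w^2*((z-l)/(z-1))*((w-l)/(w-1))^2 + (-4)*t*((w-l)/(w-1)) + 2*t*((w-l)/(w-1))^2 + 2*t*((z-l)/(z-1))*((w-l)/(w-1))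 + 8*t*w*((w-l)/(w-1)) + (-4)*t*w*((w-l)/(w-1))^2 + (-4)*t*w*((z-l)/(z-1))*((w-l)/(w-1)) + (-4)*t*w^2*((w-l)/(w-1)) + 2*t*w^2*((w-l)/(w-1))^2 + 2*t*w^2*((z-l)/(z-1))*((w-l)/(w-1)) + 2*t*z*((w-l)/(w-1)) + (-2)*t*z*((w-l)/(w-1))^2 + (-2)*t*z*((z-l)/(z-1))*((w-l)/(w-1)) + (-4)*t*z*w*((w-l)/(w-1)) + 4*t*z*w*((w-l)/(w-1))^2 + 4*t*z*w*((z-l)/(z-1))*((w-l)/(w-1)) + 2*t*z*w^2*((w-l)/(w-1)) + (-2)*t*z*w^2*((w-l)/(w-1))^2 + (-2)*t*z*w^2*((z-l)/(z-1))*((w-l)/(w-1)) + 2*t^2*((w-l)/(w-1)) + (-1)*t^2*((z-l)/(z-1)) + (-4)*t^2*w*((w-l)/(w-1)) + 2*t^2*w*((z-l)/(z-1)) + 2*t^2*w^2*((w-l)/(w-1)) + (-1)*t^2*w^2*((z-l)/(z-1)) + t^2*z + (-2)*t^2*z*((w-l)/(w-1)) + t^2*z*((z-l)/(z-1)) + (-2)*t^2*z*w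 + 4*t^2*z*w*((w-l)/(w-1)) + (-2)*t^2*z*w*((z-l)/(z-1)) + t^2*z*w^2 + (-2)*t^2*z*w^2*((w-l)/(w-1)) + t^2*z*w^2*((z-l)/(z-1)) + 2*l*((w-l)/(w-1)) + (-1)*l*((w-l)/(w-1))^2 + (-4)*l*w*((w-l)/(w-1)) + 2*l*w*((w-l)/(w-1))^2 + 2*l*w^2*((w-l)/(w-1)) + (-1)*l*w^2*((w-l)/(w-1))^2 + (-2)*l*z*((w-l)/(w-1)) + 4*l*z*w*((w-l)/(w-1)) + (-2)*l*z*w^2*((w-l)/(w-1)) + 2*l*t + (-2)*l*t*((w-l)/(w-1)) + (-4)*l*t*w + 4*l*t*w*((w-l)/(w-1)) + 2*l*t*w^2 + (-2)*l*t*w^2*((w-l)/(w-1)) + (-2)*l*t*z + 4*l*t*z*((w-l)/(w-1)) + 4*l*t*z*w + (-8)*l*t*z*w*((w-l)/(w-1)) + (-2)*l*t*z*w^2 + 4*l*t*z*w^2*((w-l)/(w-1)) + (-1)*l*t^2 + 2*l*t^2*w + (-1)*l*t^2*w^2) * ha + ((-1)*z^2*((w-l)/(w-1)) + z^2*w + z^2*w*((w-l)/(w-1))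 + 4*t*z + (-2)*t*z*((w-l)/(w-1)) + (-2)*t*z*w + 2*t*z*w*((w-l)/(w-1)) + (-2)*t*z^2 + 2*t*z^2*((w-l)/(w-1)) + (-2)*t*z^2*w*((w-l)/(w-1)) + (-1)*t^2*((w-l)/(w-1)) + t^2*w + t^2*w*((w-l)/(w-1)) + (-2)*t^2*z + 2*t^2*z*((w-l)/(w-1)) + (-2)*t^2*z*w*((w-l)/(w-1)) + 2*t^2*z^2 + (-1)*t^2*z^2*((w-l)/(w-1)) + (-1)*t^2*z^2*w + t^2*z^2*w*((w-l)/(w-1)) + (-2)*l*z + 2*l*z*((w-l)/(w-1)) + (-2)*l*z*w*((w-l)/(w-1)) + l*z^2 + (-2)*l*z^2*w + (-2)*l*t + 2*l*t*((w-l)/(w-1)) + (-2)*l*t*w*((w-l)/(w-1)) + (-2)*l*t*z + (-2)*l*t*z*((w-l)/(w-1)) + 2*l*t*z*w + 2*l*t*z*w*((w-l)/(w-1)) + 2*l*t*z^2*w + l*t^2 + (-2)*l*t^2*w + 2*l*t^2*z*w + (-1)*l*t^2*z^2 + 2*l^2 + (-1)*l^2*((w-l)/(w-1)) + (-1)*l^2*w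 + l^2*w*((w-l)/(w-1)) + 2*l^2*z*w + 2*l^2*t*w + 2*l^2*t*z + (-4)*l^2*t*z*w + (-1)*l^3) * hb

set_option maxHeartbeats 2000000 in
lemma pgl (l t : ℂ) (z w : ℂ) (hz : z ≠ l) (hw : w ≠ l) :
    (z - l) ^ 2 * (w - l) ^ 2 *
        PGamma l t (l * (z - 1) / (z - l)) (l * (w - 1) / (w - l))
      = l ^ 2 * (l - 1) ^ 2 * PGamma l t z w := by
  have ha : l * (z - 1) / (z - l) * (z - l) = l * (z - 1) :=
    div_mul_cancel₀ _ (sub_ne_zero.mpr hz)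
  have hb : l * (w - 1) / (w - l) * (w - l) = l * (w - 1) :=
    div_mul_cancel₀ _ (sub_ne_zero.mpr hw)
  rw [PGamma, PGamma]
  linear_combination (z*w^2*(l*(z-1)/(z-l))*(l*(w-1)/(w-l))^2 + 4*t*z*w^2*(l*(w-1)/(w-l)) + (-2)*t*z*w^2*(l*(w-1)/(w-l))^2 + (-2)*t*z*w^2*(l*(z-1)/(z-l))*(l*(w-1)/(w-l)) + (-2)*t^2*z*w^2*(l*(w-1)/(w-l)) + t^2*z*w^2*(l*(z-1)/(z-l)) + (-1)*l*w^2*(l*(w-1)/(w-l))^2 + (-1)*l*w^2*(l*(z-1)/(z-l))*(l*(w-1)/(w-l))^2 + (-2)*l*z*w*(l*(z-1)/(z-l))*(l*(w-1)/(w-l))^2 + (-2)*l*z*w^2*(l*(w-1)/(w-l)) + l*z*w^2*(l*(w-1)/(w-l))^2 + (-2)*l*t*w^2*(l*(w-1)/(w-l)) + 2*l*t*w^2*(l*(w-1)/(w-l))^2 + 2*l*t*w^2*(l*(z-1)/(z-l))*(l*(w-1)/(w-l)) + (-8)*l*t*z*w*(l*(w-1)/(w-l)) + 4*l*t*z*w*(l*(w-1)/(w-l))^2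 + 4*l*t*z*w*(l*(z-1)/(z-l))*(l*(w-1)/(w-l)) + (-2)*l*t*z*w^2 + 2*l*t*z*w^2*(l*(w-1)/(w-l)) + (-1)*l*t^2*w^2 + 2*l*t^2*w^2*(l*(w-1)/(w-l)) + (-1)*l*t^2*w^2*(l*(z-1)/(z-l)) + 4*l*t^2*z*w*(l*(w-1)/(w-l)) + (-2)*l*t^2*z*w*(l*(z-1)/(z-l)) + l*t^2*z*w^2 + 2*l^2*w*(l*(w-1)/(w-l))^2 + 2*l^2*w*(l*(z-1)/(z-l))*(l*(w-1)/(w-l))^2 + 2*l^2*w^2*(l*(w-1)/(w-l)) + l^2*z*(l*(z-1)/(z-l))*(l*(w-1)/(w-l))^2 + 4*l^2*z*w*(l*(w-1)/(w-l)) + (-2)*l^2*z*w*(l*(w-1)/(w-l))^2 + 4*l^2*t*w*(l*(w-1)/(w-l)) + (-4)*l^2*t*w*(l*(w-1)/(w-l))^2 + (-4)*l^2*t*w*(l*(z-1)/(z-l))*(l*(w-1)/(w-l)) + 2*l^2*t*w^2 + (-4)*l^2*t*w^2*(l*(w-1)/(w-l)) + 4*l^2*t*z*(l*(w-1)/(w-l))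 + (-2)*l^2*t*z*(l*(w-1)/(w-l))^2 + (-2)*l^2*t*z*(l*(z-1)/(z-l))*(l*(w-1)/(w-l)) + 4*l^2*t*z*w + (-4)*l^2*t*z*w*(l*(w-1)/(w-l)) + 2*l^2*t^2*w + (-4)*l^2*t^2*w*(l*(w-1)/(w-l)) + 2*l^2*t^2*w*(l*(z-1)/(z-l)) + (-2)*l^2*t^2*z*(l*(w-1)/(w-l)) + l^2*t^2*z*(l*(z-1)/(z-l)) + (-2)*l^2*t^2*z*w + (-1)*l^3*(l*(w-1)/(w-l))^2 + (-1)*l^3*(l*(z-1)/(z-l))*(l*(w-1)/(w-l))^2 + (-4)*l^3*w*(l*(w-1)/(w-l)) + (-2)*l^3*z*(l*(w-1)/(w-l)) + l^3*z*(l*(w-1)/(w-l))^2 + (-2)*l^3*t*(l*(w-1)/(w-l)) + 2*l^3*t*(l*(w-1)/(w-l))^2 + 2*l^3*t*(l*(z-1)/(z-l))*(l*(w-1)/(w-l)) + (-4)*l^3*t*w + 8*l^3*t*w*(l*(w-1)/(w-l)) + (-2)*l^3*t*z + 2*l^3*t*z*(l*(w-1)/(w-l)) + (-1)*l^3*t^2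 + 2*l^3*t^2*(l*(w-1)/(w-l)) + (-1)*l^3*t^2*(l*(z-1)/(z-l)) + l^3*t^2*z + 2*l^4*(l*(w-1)/(w-l)) + 2*l^4*t + (-4)*l^4*t*(l*(w-1)/(w-l))) * ha + (t^2*z^2*w*(l*(w-1)/(w-l)) + (-4)*l*t*z*w + 2*l*t*z*w*(l*(w-1)/(w-l)) + 2*l*t*z^2*w + (-2)*l*t*z^2*w*(l*(w-1)/(w-l)) + 2*l*t^2*z*w + (-2)*l*t^2*z*w*(l*(w-1)/(w-l)) + (-1)*l*t^2*z^2 + (-1)*l*t^2*z^2*(l*(w-1)/(w-l)) + (-1)*l*t^2*z^2*w + l^2*w*(l*(w-1)/(w-l)) + 2*l^2*z*w + (-2)*l^2*z*w*(l*(w-1)/(w-l)) + (-2)*l^2*z^2*w + l^2*z^2*w*(l*(w-1)/(w-l)) + 2*l^2*t*w + (-2)*l^2*t*w*(l*(w-1)/(w-l)) + 2*l^2*t*z + (-2)*l^2*t*z*(l*(w-1)/(w-l)) + 2*l^2*t*z*w + 2*l^2*t*z*w*(l*(w-1)/(w-l)) + 2*l^2*t*z^2*(l*(w-1)/(w-l))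 + (-2)*l^2*t^2*w + l^2*t^2*w*(l*(w-1)/(w-l)) + 2*l^2*t^2*z*(l*(w-1)/(w-l)) + 2*l^2*t^2*z^2 + (-1)*l^3 + (-1)*l^3*(l*(w-1)/(w-l)) + (-1)*l^3*w + 2*l^3*z*(l*(w-1)/(w-l)) + l^3*z^2 + (-1)*l^3*z^2*(l*(w-1)/(w-l)) + l^3*z^2*w + 2*l^3*t*(l*(w-1)/(w-l)) + (-2)*l^3*t*z + (-2)*l^3*t*z*(l*(w-1)/(w-l)) + (-2)*l^3*t*z*w + (-2)*l^3*t*z^2 + l^3*t^2 + (-1)*l^3*t^2*(l*(w-1)/(w-l)) + l^3*t^2*w + (-2)*l^3*t^2*z + 2*l^4 + (-2)*l^4*z + (-2)*l^4*t + 4*l^4*t*z) * hb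

/-- `P_Γ` is symmetric, i.e. `P_Γ(z, w) = P_Γ(w, z)`, and `Γ` is invariant under the
diagonal action of each `β_k`: with `d₀(z) = z`, `d₁(z) = z − 1`, `d_λ(z) = z − λ` the
denominators of `β₀, β₁, β_λ`, for each `k ∈ {0, 1, λ}` there is a nonzero constant
`c_k ∈ ℂ` with `d_k(z)² d_k(w)² · P_Γ(β_k(z), β_k(w)) = c_k · P_Γ(z, w)`, and for `k = 0`
one can take `c₀ = λ²`. In particular `(z, w) ↦ (w, z)` and `(z, w) ↦ (β_k(z), β_k(w))`
map `Γ` onto itself. -/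
theorem gamma_symmetries (l t : ℂ) (hl0 : l ≠ 0) (hl1 : l ≠ 1)
    (ht0 : t ≠ 0) (ht1 : t ≠ 1) (htl : t ≠ l) :
    (∀ z w : ℂ, PGamma l t z w = PGamma l t w z) ∧
    (∀ z w : ℂ, z ≠ 0 → w ≠ 0 →
      z ^ 2 * w ^ 2 * PGamma l t (l / z) (l / w) = l ^ 2 * PGamma l t z w) ∧
    (∃ c : ℂ, c ≠ 0 ∧ ∀ z w : ℂ, z ≠ 1 → w ≠ 1 →
      (z - 1) ^ 2 * (w - 1) ^ 2 *
          PGamma l t ((z - l) / (z - 1)) ((w - l) / (w - 1)) = c * PGamma l t z w) ∧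
    (∃ c : ℂ, c ≠ 0 ∧ ∀ z w : ℂ, z ≠ l → w ≠ l →
      (z - l) ^ 2 * (w - l) ^ 2 *
          PGamma l t (l * (z - 1) / (z - l)) (l * (w - 1) / (w - l)) =
        c * PGamma l t z w) ∧
    (∀ z w : ℂ, z ≠ 0 → w ≠ 0 →
      (PGamma l t z w = 0 ↔ PGamma l t (l / z) (l / w) = 0)) ∧
    (∀ z w : ℂ, z ≠ 1 → w ≠ 1 →
      (PGamma l t z w = 0 ↔ PGamma l t ((z - l) / (z - 1)) ((w - l) / (w - 1)) = 0)) ∧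
    (∀ z w : ℂ, z ≠ l → w ≠ l →
      (PGamma l t z w = 0 ↔
        PGamma l t (l * (z - 1) / (z - l)) (l * (w - 1) / (w - l)) = 0)) := by
  have hl1' : l - 1 ≠ 0 := sub_ne_zero.mpr hl1
  refine ⟨fun z w => by unfold PGamma; ring, pg0 l t,
    ⟨(l - 1) ^ 2, pow_ne_zero _ hl1', pg1 l t⟩,
    ⟨l ^ 2 * (l - 1) ^ 2, mul_ne_zero (pow_ne_zero _ hl0) (pow_ne_zero _ hl1'), pgl l t⟩,
    ?_, ?_, ?_⟩
  · intro z w hz hw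
    have h := pg0 l t z w hz hw
    constructor
    · intro h0
      have h2 : z ^ 2 * w ^ 2 * PGamma l t (l / z) (l / w) = 0 := by
        rw [h, h0, mul_zero]
      rcases mul_eq_zero.mp h2 with h1 | h1
      · rcases mul_eq_zero.mp h1 with h3 | h3
        · exact absurd h3 (pow_ne_zero _ hz)
        · exact absurd h3 (pow_ne_zero _ hw)
      · exact h1
    · intro h0
      have : l ^ 2 * PGamma l t z w = 0 := by rw [← h, h0, mul_zero]
      rcases mul_eq_zero.mp this with h1 | h1
      · exact absurd h1 (pow_ne_zero _ hl0)
      · exact h1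
  · intro z w hz hw
    have hz' : z - 1 ≠ 0 := sub_ne_zero.mpr hz
    have hw' : w - 1 ≠ 0 := sub_ne_zero.mpr hw
    have h := pg1 l t z w hz hw
    constructor
    · intro h0
      have : (z - 1) ^ 2 * (w - 1) ^ 2 *
          PGamma l t ((z - l) / (z - 1)) ((w - l) / (w - 1)) = 0 := by
        rw [h, h0, mul_zero]
      rcases mul_eq_zero.mp this with h1 | h1
      · rcases mul_eq_zero.mp h1 with h2 | h2
        · exact absurd h2 (pow_ne_zero _ hz')
        · exact absurd h2 (pow_ne_zero _ hw')
      · exact h1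
    · intro h0
      have : (l - 1) ^ 2 * PGamma l t z w = 0 := by rw [← h, h0, mul_zero]
      rcases mul_eq_zero.mp this with h1 | h1
      · exact absurd h1 (pow_ne_zero _ hl1')
      · exact h1
  · intro z w hz hw
    have hz' : z - l ≠ 0 := sub_ne_zero.mpr hz
    have hw' : w - l ≠ 0 := sub_ne_zero.mpr hw
    have h := pgl l t z w hz hw
    constructor
    · intro h0
      have : (z - l) ^ 2 * (w - l) ^ 2 *
          PGamma l t (l * (z - 1) / (z - l)) (l * (w - 1) / (w - l)) = 0 := by
        rw [h, h0, mul_zero]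
      rcases mul_eq_zero.mp this with h1 | h1
      · rcases mul_eq_zero.mp h1 with h2 | h2
        · exact absurd h2 (pow_ne_zero _ hz')
        · exact absurd h2 (pow_ne_zero _ hw')
      · exact h1
    · intro h0
      have : l ^ 2 * (l - 1) ^ 2 * PGamma l t z w = 0 := by rw [← h, h0, mul_zero]
      rcases mul_eq_zero.mp this with h1 | h1
      · rcases mul_eq_zero.mp h1 with h2 | h2
        · exact absurd h2 (pow_ne_zero _ hl0)
        · exact absurd h2 (pow_ne_zero _ hl1')
      · exact h1
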